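/- Let P be a positive definite real n×n matrix, R a positive definite real m×m matrix, H a real m×n matrix, x⁻ ∈ ℝⁿ, z ∈ ℝᵐ, and define the update cost f(x) := (z − H x)ᵀ R⁻¹ (z − H x) + (x − x⁻)ᵀ P⁻¹ (x − x⁻). Let K := P Hᵀ (H P Hᵀ + R)⁻¹ and x⁺ := x⁻ + K (z − H x⁻). Then x⁺ is the unique global minimizer of f: for every x ∈ ℝⁿ with x ≠ x⁺, f(x) > f(x⁺). -/

import Mathlib

open Matrix

private lemma symm_bilin {k l : ℕ} (M : Matrix (Fin k) (Fin k) ℝ) (hM : Mᵀ = M)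
    (a b : Fin k → ℝ) : a ⬝ᵥ (M *ᵥ b) = b ⬝ᵥ (M *ᵥ a) := by
  rw [Matrix.dotProduct_mulVec, ← Matrix.mulVec_transpose, hM, dotProduct_comm]

private lemma mulVec_dot {k l : ℕ} (A : Matrix (Fin k) (Fin l) ℝ)
    (d : Fin l → ℝ) (u : Fin k → ℝ) : (A *ᵥ d) ⬝ᵥ u = d ⬝ᵥ (Aᵀ *ᵥ u) := by
  rw [dotProduct_comm, Matrix.dotProduct_mulVec, ← Matrix.mulVec_transpose,
    dotProduct_comm]

private lemma main_aux {n m : ℕ} (Ri : Matrix (Fin m) (Fin m) ℝ)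
    (Pi : Matrix (Fin n) (Fin n) ℝ) (hRi : Riᵀ = Ri) (hPi : Piᵀ = Pi)
    (H : Matrix (Fin m) (Fin n) ℝ) (e : Fin m → ℝ) (w d : Fin n → ℝ)
    (key : Hᵀ *ᵥ (Ri *ᵥ e) = Pi *ᵥ w) :
    (e - H *ᵥ d) ⬝ᵥ (Ri *ᵥ (e - H *ᵥ d)) + (w + d) ⬝ᵥ (Pi *ᵥ (w + d))
      = e ⬝ᵥ (Ri *ᵥ e) + w ⬝ᵥ (Pi *ᵥ w)
        + ((H *ᵥ d) ⬝ᵥ (Ri *ᵥ (H *ᵥ d)) + d ⬝ᵥ (Pi *ᵥ d)) := by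
  have c1 : e ⬝ᵥ (Ri *ᵥ (H *ᵥ d)) = (H *ᵥ d) ⬝ᵥ (Ri *ᵥ e) := symm_bilin (l := 0) _ hRi _ _
  have c2 : (H *ᵥ d) ⬝ᵥ (Ri *ᵥ e) = d ⬝ᵥ (Pi *ᵥ w) := by
    rw [mulVec_dot, Matrix.mulVec_mulVec, ← Matrix.mulVec_mulVec, key]
  have c3 : w ⬝ᵥ (Pi *ᵥ d) = d ⬝ᵥ (Pi *ᵥ w) := symm_bilin (l := 0) _ hPi _ _
  simp only [Matrix.mulVec_sub, Matrix.mulVec_add, dotProduct_sub,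
    sub_dotProduct, dotProduct_add, add_dotProduct]
  rw [c1, c2, c3]
  ring

/-- The Kalman filter update `x⁺ = x⁻ + K (z − H x⁻)` with gain
`K = P Hᵀ (H P Hᵀ + R)⁻¹` is the unique global minimizer of the MAP update cost
`f(x) = (z − H x)ᵀ R⁻¹ (z − H x) + (x − x⁻)ᵀ P⁻¹ (x − x⁻)`. -/
theorem kalman_update_is_unique_MAP_minimizer {n m : ℕ}
    (P : Matrix (Fin n) (Fin n) ℝ) (R : Matrix (Fin m) (Fin m) ℝ)
    (H : Matrix (Fin m) (Fin n) ℝ) (hP : P.PosDef) (hR : R.PosDef)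
    (xm : Fin n → ℝ) (z : Fin m → ℝ)
    (f : (Fin n → ℝ) → ℝ)
    (hf : f = fun x => (z - H *ᵥ x) ⬝ᵥ (R⁻¹ *ᵥ (z - H *ᵥ x))
      + (x - xm) ⬝ᵥ (P⁻¹ *ᵥ (x - xm)))
    (K : Matrix (Fin n) (Fin m) ℝ) (hK : K = P * Hᵀ * (H * P * Hᵀ + R)⁻¹)
    (xp : Fin n → ℝ) (hxp : xp = xm + K *ᵥ (z - H *ᵥ xm)) :
    ∀ x : Fin n → ℝ, x ≠ xp → f x > f xp := by
  set S : Matrix (Fin m) (Fin m) ℝ := H * P * Hᵀ + R with hS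
  have hHPHt : (H * P * Hᵀ).PosSemidef := by
    have := hP.posSemidef.mul_mul_conjTranspose_same H
    simpa using this
  have hSpd : S.PosDef := Matrix.PosDef.posSemidef_add hHPHt hR
  have hSdet : IsUnit S.det := hSpd.det_pos.ne'.isUnit
  have hPdet : IsUnit P.det := hP.det_pos.ne'.isUnit
  have hRdet : IsUnit R.det := hR.det_pos.ne'.isUnit
  have hRinvT : (R⁻¹)ᵀ = R⁻¹ := by
    have := hR.inv.isHermitian
    simpa [Matrix.IsHermitian] using this
  have hPinvT : (P⁻¹)ᵀ = P⁻¹ := by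
    have := hP.inv.isHermitian
    simpa [Matrix.IsHermitian] using this
  -- gain identity
  have hPK : P⁻¹ * K = Hᵀ * S⁻¹ := by
    rw [hK, ← Matrix.mul_assoc, ← Matrix.mul_assoc,
      Matrix.nonsing_inv_mul _ hPdet, Matrix.one_mul]
  have hRR : Hᵀ * R⁻¹ * R = Hᵀ := by
    rw [Matrix.mul_assoc, Matrix.nonsing_inv_mul _ hRdet, Matrix.mul_one]
  have h1 : Hᵀ * R⁻¹ * H * P * Hᵀ = Hᵀ * R⁻¹ * S - Hᵀ := by
    rw [hS, Matrix.mul_add, hRR]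
    simp only [Matrix.mul_assoc]
    abel
  have h2 : Hᵀ * R⁻¹ * H * (P * Hᵀ * S⁻¹) = Hᵀ * R⁻¹ * H * P * Hᵀ * S⁻¹ := by
    simp only [Matrix.mul_assoc]
  have hgain : Hᵀ * R⁻¹ - Hᵀ * R⁻¹ * H * K = P⁻¹ * K := by
    rw [hPK, hK, h2, h1, Matrix.sub_mul, Matrix.mul_assoc (Hᵀ * R⁻¹),
      Matrix.mul_nonsing_inv _ hSdet, Matrix.mul_one]
    abel
  -- stationarity at xp
  have key : Hᵀ *ᵥ (R⁻¹ *ᵥ (z - H *ᵥ xp)) = P⁻¹ *ᵥ (xp - xm) := by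
    have hv1 : xp - xm = K *ᵥ (z - H *ᵥ xm) := by rw [hxp]; abel
    have hv2 : z - H *ᵥ xp = (z - H *ᵥ xm) - H *ᵥ (K *ᵥ (z - H *ᵥ xm)) := by
      rw [hxp, Matrix.mulVec_add]; abel
    rw [hv1, hv2]
    set v := z - H *ᵥ xm with hv
    have := congrArg (fun M => M *ᵥ v) hgain
    simp only [Matrix.sub_mulVec, ← Matrix.mulVec_mulVec] at this
    simp only [Matrix.mulVec_sub]
    exact this
  -- quadratic expansion
  intro x hx
  have hd0 : x - xp ≠ 0 := sub_ne_zero.mpr hx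
  have e1 : z - H *ᵥ x = (z - H *ᵥ xp) - H *ᵥ (x - xp) := by
    rw [Matrix.mulVec_sub]; abel
  have e2 : x - xm = (xp - xm) + (x - xp) := by abel
  have hquad : 0 < (H *ᵥ (x - xp)) ⬝ᵥ (R⁻¹ *ᵥ (H *ᵥ (x - xp)))
      + (x - xp) ⬝ᵥ (P⁻¹ *ᵥ (x - xp)) := by
    have h1 : 0 ≤ (H *ᵥ (x - xp)) ⬝ᵥ (R⁻¹ *ᵥ (H *ᵥ (x - xp))) := by
      have := hR.inv.posSemidef.dotProduct_mulVec_nonneg (H *ᵥ (x - xp))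
      simpa using this
    have h2 : 0 < (x - xp) ⬝ᵥ (P⁻¹ *ᵥ (x - xp)) := by
      have := hP.inv.dotProduct_mulVec_pos hd0
      simpa using this
    linarith
  rw [hf]
  simp only []
  rw [e1, e2, main_aux R⁻¹ P⁻¹ hRinvT hPinvT H (z - H *ᵥ xp) (xp - xm) (x - xp) key]
  linarith
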